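/- Let (Ω, F, P) be a probability space and let p ∈ (0,1]. Let X, U, I be real-valued random variables such that: I takes values in {0,1} with E[I] = p; U is integrable with E[U] = 0; X is integrable; I and U are independent of each other; and the pair (I, U) is independent of X. Then the surrogate W = I·(X/p + U) is integrable and satisfies E[W | σ(X)] = X almost surely, where σ(X) is the σ-algebra generated by X. -/

import Mathlib

open MeasureTheory ProbabilityTheory

/-- Let `p ∈ (0,1]` and let `X, U, I` be real random variables on a probability space such that
`I` takes values in `{0,1}` with `E[I] = p`, `U` is integrable with `E[U] = 0`, `X` is
integrable, `I` and `U` are independent of each other, and the pair `(I, U)` is independent of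
`X`. Then the surrogate `W = I·(X/p + U)` is integrable and `E[W | σ(X)] = X` a.s. -/
theorem surrogate_condexp_eq
    {Ω : Type} [MeasureSpace Ω] [IsProbabilityMeasure (ℙ : Measure Ω)]
    (p : ℝ) (hp : p ∈ Set.Ioc (0 : ℝ) 1)
    (X U I : Ω → ℝ)
    (hXmeas : Measurable X) (hUmeas : Measurable U) (hImeas : Measurable I)
    (hI01 : ∀ ω, I ω = 0 ∨ I ω = 1)
    (hImean : ∫ ω, I ω ∂ℙ = p)
    (hUint : Integrable U ℙ) (hUmean : ∫ ω, U ω ∂ℙ = 0)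
    (hXint : Integrable X ℙ)
    (hIU : IndepFun I U ℙ)
    (hIUX : IndepFun (fun ω => (I ω, U ω)) X ℙ) :
    Integrable (fun ω => I ω * (X ω / p + U ω)) ℙ ∧
      ℙ[fun ω => I ω * (X ω / p + U ω) | MeasurableSpace.comap X inferInstance]
        =ᵐ[ℙ] X := by
  obtain ⟨hp0, hp1⟩ := hp
  have hpne : p ≠ 0 := ne_of_gt hp0
  have hIUmeas : Measurable (fun ω => (I ω, U ω)) := hImeas.prodMk hUmeas
  set mX := MeasurableSpace.comap X inferInstance with hmX
  have hmXle : mX ≤ _ := hXmeas.comap_le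
  have hIbd : ∀ ω, ‖I ω‖ ≤ 1 := fun ω => by
    rcases hI01 ω with h | h <;> simp [h]
  have hIint : Integrable I ℙ :=
    (integrable_const (1 : ℝ)).mono' hImeas.aestronglyMeasurable (ae_of_all _ hIbd)
  -- independence consequences
  have hIX : IndepFun I X ℙ := hIUX.comp measurable_fst measurable_id
  have hIUX' : IndepFun (fun ω => I ω * U ω) X ℙ :=
    hIUX.comp (measurable_fst.mul measurable_snd) measurable_id
  -- integrability
  have hfint : Integrable (fun ω => X ω / p * I ω) ℙ := by
    refine (hXint.norm.div_const p).mono' ((hXmeas.div_const p).mul hImeas).aestronglyMeasurable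
      (ae_of_all _ fun ω => ?_)
    have h1 : ‖X ω / p * I ω‖ ≤ ‖X ω / p‖ := by
      calc ‖X ω / p * I ω‖ = ‖X ω / p‖ * ‖I ω‖ := norm_mul _ _
        _ ≤ ‖X ω / p‖ * 1 := mul_le_mul_of_nonneg_left (hIbd ω) (norm_nonneg _)
        _ = ‖X ω / p‖ := mul_one _
    have h2 : ‖X ω / p‖ = ‖X ω‖ / p := by
      rw [norm_div, Real.norm_of_nonneg hp0.le]
    exact h1.trans_eq h2
  have hgint : Integrable (fun ω => I ω * U ω) ℙ := hIU.integrable_mul hIint hUint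
  have hWeq : (fun ω => I ω * (X ω / p + U ω))
      = (fun ω => X ω / p * I ω) + fun ω => I ω * U ω := by
    funext ω; simp only [Pi.add_apply]; ring
  have hWint : Integrable (fun ω => I ω * (X ω / p + U ω)) ℙ := by
    rw [hWeq]; exact hfint.add hgint
  refine ⟨hWint, ?_⟩
  -- conditional expectations
  have hXm : Measurable[mX] X := (Measurable.of_comap_le le_rfl)
  have hIcond : ℙ[I | mX] =ᵐ[ℙ] fun _ => p := by
    have := condExp_indep_eq (μ := ℙ) hImeas.comap_le hmXle
      (f := I) (Measurable.of_comap_le le_rfl).stronglyMeasurable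
      ((IndepFun_iff_Indep _ _ _).mp hIX)
    simpa [hImean] using this
  have h2 : ℙ[fun ω => X ω / p * I ω | mX] =ᵐ[ℙ] X := by
    have hmul := condExp_mul_of_stronglyMeasurable_left (μ := ℙ) (m := mX)
      (f := fun ω => X ω / p) (g := I)
      ((hXm.div_const p).stronglyMeasurable) hfint hIint
    refine hmul.trans ?_
    filter_upwards [hIcond] with ω hω
    simp only [Pi.mul_apply, hω]
    field_simp
  have h3 : ℙ[fun ω => I ω * U ω | mX] =ᵐ[ℙ] fun _ => (0 : ℝ) := by
    have hm : Measurable[MeasurableSpace.comap (fun ω => (I ω, U ω)) inferInstance]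
        (fun ω => I ω * U ω) :=
      (measurable_fst.mul measurable_snd).comp (Measurable.of_comap_le le_rfl)
    have := condExp_indep_eq (μ := ℙ) hIUmeas.comap_le hmXle
      (f := fun ω => I ω * U ω) hm.stronglyMeasurable
      ((IndepFun_iff_Indep _ _ _).mp hIUX)
    refine this.trans ?_
    have : ∫ ω, I ω * U ω ∂ℙ = 0 := by
      have := hIU.integral_mul_eq_mul_integral hIint.aestronglyMeasurable hUint.aestronglyMeasurable
      simpa [hUmean] using this
    simp [this]
  calc ℙ[fun ω => I ω * (X ω / p + U ω) | mX]
      =ᵐ[ℙ] ℙ[fun ω => X ω / p * I ω | mX] + ℙ[fun ω => I ω * U ω | mX] := by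
        rw [hWeq]; exact condExp_add hfint hgint _
    _ =ᵐ[ℙ] X := by
        filter_upwards [h2, h3] with ω hω2 hω3
        simp [hω2, hω3]
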